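/- Define the entropic Gromov–Wasserstein objective F(π) = −2·tr(πᵀ C π Dᵀ) + ε·Σ_{ij} π_{ij} log π_{ij} over positive matrices π of size m × n. If 4‖C‖_op‖D‖_op ≤ ε/2 and all entries of π satisfy 0 < π_{ij} ≤ 1, then the Hessian of F at π satisfies ⟨Δ, ∇²F(π)(Δ)⟩ ≥ (ε/2)‖Δ‖_F² for every m × n direction matrix Δ; that is, F is (ε/2)-strongly convex at π. -/

import Mathlib

open Matrix BigOperators

/-- Operator (spectral) norm of a square real matrix. -/
noncomputable def opNorm {m : ℕ} (A : Matrix (Fin m) (Fin m) ℝ) : ℝ :=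
  ‖(Matrix.toEuclideanCLM (𝕜 := ℝ) A : EuclideanSpace ℝ (Fin m) →L[ℝ] EuclideanSpace ℝ (Fin m))‖

lemma opNorm_nonneg {m : ℕ} (A : Matrix (Fin m) (Fin m) ℝ) : 0 ≤ opNorm A :=
  norm_nonneg _

set_option synthInstance.maxHeartbeats 1000000 in
set_option maxHeartbeats 1000000 in
lemma opNorm_transpose {m : ℕ} (A : Matrix (Fin m) (Fin m) ℝ) : opNorm Aᵀ = opNorm A := by
  have h : Aᵀ = star A := by
    ext i j; simp [Matrix.star_apply]
  unfold opNorm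
  rw [h, map_star, ContinuousLinearMap.star_eq_adjoint]
  exact ContinuousLinearMap.adjoint.norm_map _

lemma mulVec_sq_bound {m : ℕ} (A : Matrix (Fin m) (Fin m) ℝ) (v : Fin m → ℝ) :
    ∑ i, (A.mulVec v i) ^ 2 ≤ opNorm A ^ 2 * ∑ i, (v i) ^ 2 := by
  set x : EuclideanSpace ℝ (Fin m) := (WithLp.equiv 2 _).symm v
  have hx : ‖x‖ ^ 2 = ∑ i, (v i) ^ 2 := by
    rw [EuclideanSpace.norm_eq, Real.sq_sqrt (by positivity)]
    simp [x, Real.norm_eq_abs, sq_abs]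
  have hAx : (Matrix.toEuclideanCLM (𝕜 := ℝ) A) x
      = (WithLp.equiv 2 _).symm (A.mulVec v) := by
    simp [x, Matrix.toEuclideanCLM_toLp, Matrix.toLin'_apply]
  have hAxn : ‖(Matrix.toEuclideanCLM (𝕜 := ℝ) A) x‖ ^ 2 = ∑ i, (A.mulVec v i) ^ 2 := by
    rw [hAx, EuclideanSpace.norm_eq, Real.sq_sqrt (by positivity)]
    simp [Real.norm_eq_abs, sq_abs]
  have h := ContinuousLinearMap.le_opNorm (Matrix.toEuclideanCLM (𝕜 := ℝ) A) x
  have h2 : ‖(Matrix.toEuclideanCLM (𝕜 := ℝ) A) x‖ ^ 2 ≤ (opNorm A * ‖x‖) ^ 2 :=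
    pow_le_pow_left₀ (norm_nonneg _) h 2
  rw [hAxn, mul_pow, hx] at h2
  exact h2

lemma left_mul_bound {m n : ℕ} (A : Matrix (Fin m) (Fin m) ℝ) (M : Matrix (Fin m) (Fin n) ℝ) :
    ∑ i, ∑ j, ((A * M) i j) ^ 2 ≤ opNorm A ^ 2 * ∑ i, ∑ j, (M i j) ^ 2 := by
  rw [Finset.sum_comm]
  calc ∑ j, ∑ i, ((A * M) i j) ^ 2
      = ∑ j, ∑ i, (A.mulVec (fun k => M k j) i) ^ 2 := by
        simp [Matrix.mul_apply, Matrix.mulVec, dotProduct]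
    _ ≤ ∑ j, opNorm A ^ 2 * ∑ i, (M i j) ^ 2 :=
        Finset.sum_le_sum fun j _ => mulVec_sq_bound A _
    _ = opNorm A ^ 2 * ∑ i, ∑ j, (M i j) ^ 2 := by
        rw [← Finset.mul_sum, Finset.sum_comm]

lemma right_mul_bound {m n : ℕ} (B : Matrix (Fin n) (Fin n) ℝ) (M : Matrix (Fin m) (Fin n) ℝ) :
    ∑ i, ∑ j, ((M * Bᵀ) i j) ^ 2 ≤ opNorm B ^ 2 * ∑ i, ∑ j, (M i j) ^ 2 := by
  calc ∑ i, ∑ j, ((M * Bᵀ) i j) ^ 2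
      = ∑ i, ∑ j, (B.mulVec (M i) j) ^ 2 := by
        simp [Matrix.mul_apply, Matrix.mulVec, dotProduct, Matrix.transpose_apply,
          mul_comm]
    _ ≤ ∑ i, opNorm B ^ 2 * ∑ j, (M i j) ^ 2 :=
        Finset.sum_le_sum fun i _ => mulVec_sq_bound B _
    _ = opNorm B ^ 2 * ∑ i, ∑ j, (M i j) ^ 2 := by rw [← Finset.mul_sum]

lemma inner_bound {m n : ℕ} (A : Matrix (Fin m) (Fin m) ℝ) (B : Matrix (Fin n) (Fin n) ℝ)
    (Δ : Matrix (Fin m) (Fin n) ℝ) :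
    ∑ i, ∑ j, Δ i j * ((A * Δ * Bᵀ) i j) ≤
      opNorm A * opNorm B * ∑ i, ∑ j, (Δ i j) ^ 2 := by
  set E := A * Δ * Bᵀ with hEdef
  set T := ∑ i, ∑ j, (Δ i j) ^ 2 with hT
  have hTnn : 0 ≤ T := by positivity
  have hE : ∑ i, ∑ j, (E i j) ^ 2 ≤ (opNorm A * opNorm B) ^ 2 * T := by
    calc ∑ i, ∑ j, (E i j) ^ 2
        ≤ opNorm B ^ 2 * ∑ i, ∑ j, ((A * Δ) i j) ^ 2 := right_mul_bound B (A * Δ)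
      _ ≤ opNorm B ^ 2 * (opNorm A ^ 2 * T) := by
          apply mul_le_mul_of_nonneg_left (left_mul_bound A Δ) (by positivity)
      _ = (opNorm A * opNorm B) ^ 2 * T := by ring
  -- Cauchy-Schwarz
  have hCS : (∑ i, ∑ j, Δ i j * E i j) ^ 2 ≤
      (∑ i, ∑ j, (Δ i j) ^ 2) * (∑ i, ∑ j, (E i j) ^ 2) := by
    have h2 := Finset.sum_mul_sq_le_sq_mul_sq
      (Finset.univ : Finset (Fin m × Fin n)) (fun p => Δ p.1 p.2) (fun p => E p.1 p.2)
    simpa [Fintype.sum_prod_type] using h2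
  have hnn : 0 ≤ opNorm A * opNorm B :=
    mul_nonneg (opNorm_nonneg A) (opNorm_nonneg B)
  have hsq : (∑ i, ∑ j, Δ i j * E i j) ^ 2 ≤ (opNorm A * opNorm B * T) ^ 2 := by
    calc (∑ i, ∑ j, Δ i j * E i j) ^ 2
        ≤ T * (∑ i, ∑ j, (E i j) ^ 2) := hCS
      _ ≤ T * ((opNorm A * opNorm B) ^ 2 * T) := mul_le_mul_of_nonneg_left hE hTnn
      _ = (opNorm A * opNorm B * T) ^ 2 := by ring
  exact le_of_sq_le_sq hsq (by positivity)

/-- the Hessian quadratic form of the entropic GW objective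
`F(π) = -2 tr(πᵀ C π Dᵀ) + ε Σ π_{ij} log π_{ij}`, namely
`⟨Δ, ∇²F(π)(Δ)⟩ = -2⟨Δ, CΔDᵀ + CᵀΔD⟩ + ε Σ Δ_{ij}²/π_{ij}`,
is bounded below by `(ε/2)‖Δ‖_F²` when `4‖C‖_op‖D‖_op ≤ ε/2` and
`0 < π_{ij} ≤ 1`. -/
theorem egw_hessian_strong_convexity
    {m n : ℕ}
    (C : Matrix (Fin m) (Fin m) ℝ) (D : Matrix (Fin n) (Fin n) ℝ)
    (ε : ℝ) (hε : 0 < ε)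
    (hCD : 4 * (opNorm C * opNorm D) ≤ ε / 2)
    (π Δ : Matrix (Fin m) (Fin n) ℝ)
    (hπpos : ∀ i j, 0 < π i j) (hπle : ∀ i j, π i j ≤ 1) :
    (ε / 2) * ∑ i, ∑ j, (Δ i j) ^ 2 ≤
      -2 * (∑ i, ∑ j, Δ i j * ((C * Δ * Dᵀ) i j + (Cᵀ * Δ * D) i j)) +
        ε * ∑ i, ∑ j, (Δ i j) ^ 2 / π i j := by
  set T := ∑ i, ∑ j, (Δ i j) ^ 2 with hT
  have hTnn : 0 ≤ T := by positivity
  have hK : 0 ≤ opNorm C * opNorm D := mul_nonneg (opNorm_nonneg C) (opNorm_nonneg D)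
  -- split the sum
  have hsplit : ∑ i, ∑ j, Δ i j * ((C * Δ * Dᵀ) i j + (Cᵀ * Δ * D) i j)
      = (∑ i, ∑ j, Δ i j * ((C * Δ * Dᵀ) i j))
        + ∑ i, ∑ j, Δ i j * ((Cᵀ * Δ * D) i j) := by
    simp [mul_add, Finset.sum_add_distrib]
  have h1 : ∑ i, ∑ j, Δ i j * ((C * Δ * Dᵀ) i j) ≤ opNorm C * opNorm D * T :=
    inner_bound C D Δ
  have h2 : ∑ i, ∑ j, Δ i j * ((Cᵀ * Δ * D) i j) ≤ opNorm C * opNorm D * T := by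
    have := inner_bound Cᵀ Dᵀ Δ
    rw [Matrix.transpose_transpose, opNorm_transpose, opNorm_transpose] at this
    exact this
  -- entropy term
  have hent : T ≤ ∑ i, ∑ j, (Δ i j) ^ 2 / π i j := by
    apply Finset.sum_le_sum; intro i _
    apply Finset.sum_le_sum; intro j _
    rw [le_div_iff₀ (hπpos i j)]
    exact mul_le_of_le_one_right (sq_nonneg _) (hπle i j)
  rw [hsplit]
  nlinarith [mul_le_mul_of_nonneg_left hent (le_of_lt hε)]
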